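/- The set of nonnegative integers whose base-3 expansion uses only digits 0 and 1 contains no nontrivial three-term arithmetic progression: if x, y, z all have only digits 0 and 1 in base 3, x < y, and x + z = 2y, then y = z. -/

import Mathlib

lemma digit01_head {n : ℕ} (h : ∀ c ∈ Nat.digits 3 n, c ≤ 1) : n % 3 ≤ 1 := by
  rcases Nat.eq_zero_or_pos n with h0 | h0
  · simp [h0]
  · exact h _ (by rw [Nat.digits_def' (by norm_num) h0]; exact List.mem_cons_self)

lemma digit01_tail {n : ℕ} (h : ∀ c ∈ Nat.digits 3 n, c ≤ 1) :
    ∀ c ∈ Nat.digits 3 (n / 3), c ≤ 1 := by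
  rcases Nat.eq_zero_or_pos n with h0 | h0
  · simp [h0]
  · intro c hc
    exact h c (by rw [Nat.digits_def' (by norm_num) h0]; exact List.mem_cons_of_mem _ hc)

lemma digit01_key : ∀ n x y z : ℕ, x + y + z ≤ n →
    (∀ c ∈ Nat.digits 3 x, c ≤ 1) → (∀ c ∈ Nat.digits 3 y, c ≤ 1) →
    (∀ c ∈ Nat.digits 3 z, c ≤ 1) → x + z = 2 * y → x = y ∧ z = y := by
  intro n
  induction n with
  | zero => intro x y z h _ _ _ _; omega
  | succ n ih =>
    intro x y z hle hx hy hz hap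
    rcases Nat.eq_zero_or_pos (x + y + z) with h0 | h0
    · omega
    · have ha := digit01_head hx
      have hb := digit01_head hy
      have hc := digit01_head hz
      have hdiv : x / 3 + z / 3 = 2 * (y / 3) := by omega
      have := ih (x / 3) (y / 3) (z / 3) (by omega) (digit01_tail hx)
        (digit01_tail hy) (digit01_tail hz) hdiv
      omega

/-- The set of nonnegative integers whose base-3 expansion uses only digits 0 and 1
contains no nontrivial three-term arithmetic progression. -/
theorem digits01_no_threeAP (x y z : ℕ)
    (hx : ∀ c ∈ Nat.digits 3 x, c ≤ 1)
    (hy : ∀ c ∈ Nat.digits 3 y, c ≤ 1)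
    (hz : ∀ c ∈ Nat.digits 3 z, c ≤ 1)
    (hxy : x < y) (hap : x + z = 2 * y) : y = z := by
  have := digit01_key (x + y + z) x y z le_rfl hx hy hz hap
  omega
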